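/- If f : ℝⁿ → ℝ is M_f-self-concordant-like and A : ℝᵐ → ℝⁿ is a linear map with operator norm ‖A‖₂, and b ∈ ℝⁿ, then the function h(x) := f(Ax + b) is (M_f · ‖A‖₂)-self-concordant-like. -/
import Mathlib


open scoped RealInnerProductSpace

/-- A convex `C³` function `f` is `M`-self-concordant-like if along every line
`t ↦ f (x + t • u)` the third derivative is bounded by `M * φ''(t) * ‖u‖`. -/
def SCLike {E : Type*} [NormedAddCommGroup E] [InnerProductSpace ℝ E]
    (M : ℝ) (f : E → ℝ) : Prop :=
  ContDiff ℝ 3 f ∧ ConvexOn ℝ Set.univ f ∧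
    ∀ x u : E, ∀ t : ℝ,
      |deriv^[3] (fun s : ℝ => f (x + s • u)) t| ≤
        M * deriv^[2] (fun s : ℝ => f (x + s • u)) t * ‖u‖

/-- Pre-composition with an affine map `x ↦ A x + b` turns an `M_f`-self-concordant-like
function into an `M_f * ‖A‖`-self-concordant-like one. -/
theorem sclike_comp_affine {E F : Type*}
    [NormedAddCommGroup E] [InnerProductSpace ℝ E]
    [NormedAddCommGroup F] [InnerProductSpace ℝ F]
    (M : ℝ) (hM : 0 < M) (f : E → ℝ) (hf : SCLike M f)
    (A : F →L[ℝ] E) (b : E) :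
    SCLike (M * ‖A‖) (fun x : F => f (A x + b)) := by
  obtain ⟨hsmooth, hconv, hineq⟩ := hf
  refine ⟨hsmooth.comp ((A.contDiff).add contDiff_const), ?_, ?_⟩
  · refine ⟨convex_univ, ?_⟩
    intro x _ y _ a c ha hc hac
    have key : A (a • x + c • y) + b = a • (A x + b) + c • (A y + b) := by
      simp only [map_add, map_smul, smul_add]
      have hb : a • b + c • b = b := by rw [← add_smul, hac, one_smul]
      conv_lhs => rw [← hb]
      abel
    show f (A (a • x + c • y) + b) ≤ _
    rw [key]
    exact hconv.2 (Set.mem_univ (A x + b)) (Set.mem_univ (A y + b)) ha hc hac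
  · intro x u t
    have hfun : (fun s : ℝ => (fun x : F => f (A x + b)) (x + s • u)) =
        fun s : ℝ => f ((A x + b) + s • (A u)) := by
      funext s
      simp only [map_add, map_smul]
      abel
    rw [hfun]
    by_cases hAu : A u = 0
    · have hconst : (fun s : ℝ => f ((A x + b) + s • (A u))) =
          fun _ : ℝ => f (A x + b) := by
        funext s; rw [hAu, smul_zero, add_zero]
      rw [hconst]
      have h1 : deriv (fun _ : ℝ => f (A x + b)) = fun _ : ℝ => 0 := deriv_const' _
      have h2 : deriv (fun _ : ℝ => (0 : ℝ)) = fun _ : ℝ => 0 := deriv_const' _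
      simp [Function.iterate_succ, Function.iterate_zero, Function.comp, h1, h2]
    · have := hineq (A x + b) (A u) t
      have hd2 : 0 ≤ deriv^[2] (fun s : ℝ => f ((A x + b) + s • (A u))) t := by
        by_contra h
        push_neg at h
        have : M * deriv^[2] (fun s : ℝ => f ((A x + b) + s • (A u))) t * ‖A u‖ < 0 := by
          apply mul_neg_of_neg_of_pos
          · exact mul_neg_of_pos_of_neg hM h
          · exact norm_pos_iff.mpr hAu
        linarith [abs_nonneg (deriv^[3] (fun s : ℝ => f ((A x + b) + s • (A u))) t)]
      calc |deriv^[3] (fun s : ℝ => f ((A x + b) + s • (A u))) t|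
          ≤ M * deriv^[2] (fun s : ℝ => f ((A x + b) + s • (A u))) t * ‖A u‖ := this
        _ ≤ M * deriv^[2] (fun s : ℝ => f ((A x + b) + s • (A u))) t * (‖A‖ * ‖u‖) := by
            apply mul_le_mul_of_nonneg_left (A.le_opNorm u)
            exact mul_nonneg hM.le hd2
        _ = M * ‖A‖ * deriv^[2] (fun s : ℝ => f ((A x + b) + s • (A u))) t * ‖u‖ := by ring
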